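/- (Adequacy of collective p-bisimulation) Let (M,s) and (M′,s′) be pointed Kripke models, p an atom, and φ any formula of the language L^D_C in which p does not occur. If there is a collective p-bisimulation between (M,s) and (M′,s′), then M,s ⊨ φ if and only if M′,s′ ⊨ φ. -/
import Mathlib


/-!
Multi-agent epistemic modal logic with distributed knowledge and common knowledge.
Agents are `Fin n`, atoms are natural numbers.
-/

namespace DKLogic

/-- Formulas of the language `L^D_C`: atoms, negation, conjunction, disjunction,
the distributed-knowledge modality `D_B` for nonempty sets `B` of agents, and
the common-knowledge modality `C`. -/
inductive FormulaC (n : ℕ) : Type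
  | atom : ℕ → FormulaC n
  | neg : FormulaC n → FormulaC n
  | and : FormulaC n → FormulaC n → FormulaC n
  | or : FormulaC n → FormulaC n → FormulaC n
  | D : {B : Finset (Fin n) // B.Nonempty} → FormulaC n → FormulaC n
  | C : FormulaC n → FormulaC n

/-- The atoms occurring in a formula. -/
def FormulaC.atoms {n : ℕ} : FormulaC n → Finset ℕ
  | atom q => {q}
  | neg φ => atoms φ
  | and φ ψ => atoms φ ∪ atoms ψ
  | or φ ψ => atoms φ ∪ atoms ψ
  | D _ φ => atoms φ
  | C φ => atoms φ

/-- A Kripke model over world type `W` with `n` agents. -/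
structure KModel (n : ℕ) (W : Type) where
  R : Fin n → W → W → Prop
  V : W → Set ℕ

/-- The distributed accessibility relation `R_B = ⋂_{i ∈ B} R_i`. -/
def KModel.RB {n : ℕ} {W : Type} (M : KModel n W) (B : Finset (Fin n)) (s t : W) : Prop :=
  ∀ i ∈ B, M.R i s t

/-- `TCrel M s t` holds iff `t ∈ TC(s)`, i.e. `t` is in the image of `s` under the
transitive closure of `⋃_{i} R_i`. -/
def TCrel {n : ℕ} {W : Type} (M : KModel n W) : W → W → Prop :=
  Relation.TransGen (fun u v => ∃ i : Fin n, M.R i u v)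

/-- Satisfaction for `L^D_C`. -/
def Sat {n : ℕ} {W : Type} (M : KModel n W) : W → FormulaC n → Prop
  | s, .atom q => q ∈ M.V s
  | s, .neg φ => ¬ Sat M s φ
  | s, .and φ ψ => Sat M s φ ∧ Sat M s ψ
  | s, .or φ ψ => Sat M s φ ∨ Sat M s ψ
  | s, .D B φ => ∀ t : W, M.RB B.1 s t → Sat M t φ
  | s, .C φ => ∀ t : W, TCrel M s t → Sat M t φ

/-- Collective `p`-bisimulation between two pointed models. -/
def CollPBisim {n : ℕ} {W W' : Type} (M : KModel n W) (s : W) (M' : KModel n W') (s' : W')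
    (p : ℕ) : Prop :=
  ∃ ρ : W → W' → Prop, ρ s s' ∧
    ∀ u u', ρ u u' →
      ((∀ q : ℕ, q ≠ p → (q ∈ M.V u ↔ q ∈ M'.V u')) ∧
       (∀ B : Finset (Fin n), B.Nonempty → ∀ v, M.RB B u v → ∃ v', M'.RB B u' v' ∧ ρ v v') ∧
       (∀ B : Finset (Fin n), B.Nonempty → ∀ v', M'.RB B u' v' → ∃ v, M.RB B u v ∧ ρ v v'))

/-- the adequacy lemma of collective `p`-bisimulation: if `(M,s)` and
`(M',s')` are collectively `p`-bisimilar, then they satisfy the same `L^D_C`-formulas in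
which `p` does not occur. -/
theorem collPBisim_adequacy {n : ℕ} {W W' : Type} (M : KModel n W) (s : W)
    (M' : KModel n W') (s' : W') (p : ℕ) (φ : FormulaC n) (hp : p ∉ φ.atoms)
    (h : CollPBisim M s M' s' p) :
    Sat M s φ ↔ Sat M' s' φ := by
  obtain ⟨ρ, hs, hbis⟩ := h
  have forthTC : ∀ u u', ρ u u' → ∀ v, TCrel M u v → ∃ v', TCrel M' u' v' ∧ ρ v v' := by
    intro u u' huu v hv
    induction hv generalizing u' with
    | single hstep =>
      obtain ⟨i, hi⟩ := hstep
      obtain ⟨v', hv', hρ⟩ := (hbis _ _ huu).2.1 {i} ⟨i, Finset.mem_singleton_self i⟩ _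
        (fun j hj => by simp at hj; subst hj; exact hi)
      exact ⟨v', Relation.TransGen.single ⟨i, hv' i (Finset.mem_singleton_self i)⟩, hρ⟩
    | tail _ hstep ih =>
      obtain ⟨w', hw', hρw⟩ := ih _ huu
      obtain ⟨i, hi⟩ := hstep
      obtain ⟨v', hv', hρ⟩ := (hbis _ _ hρw).2.1 {i} ⟨i, Finset.mem_singleton_self i⟩ _
        (fun j hj => by simp at hj; subst hj; exact hi)
      exact ⟨v', hw'.tail ⟨i, hv' i (Finset.mem_singleton_self i)⟩, hρ⟩
  have backTC : ∀ u u', ρ u u' → ∀ v', TCrel M' u' v' → ∃ v, TCrel M u v ∧ ρ v v' := by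
    intro u u' huu v' hv'
    induction hv' generalizing u with
    | single hstep =>
      obtain ⟨i, hi⟩ := hstep
      obtain ⟨v, hv, hρ⟩ := (hbis _ _ huu).2.2 {i} ⟨i, Finset.mem_singleton_self i⟩ _
        (fun j hj => by simp at hj; subst hj; exact hi)
      exact ⟨v, Relation.TransGen.single ⟨i, hv i (Finset.mem_singleton_self i)⟩, hρ⟩
    | tail _ hstep ih =>
      obtain ⟨w, hw, hρw⟩ := ih _ huu
      obtain ⟨i, hi⟩ := hstep
      obtain ⟨v, hv, hρ⟩ := (hbis _ _ hρw).2.2 {i} ⟨i, Finset.mem_singleton_self i⟩ _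
        (fun j hj => by simp at hj; subst hj; exact hi)
      exact ⟨v, hw.tail ⟨i, hv i (Finset.mem_singleton_self i)⟩, hρ⟩
  induction φ generalizing s s' with
  | atom q =>
    simp only [FormulaC.atoms, Finset.mem_singleton] at hp
    exact (hbis _ _ hs).1 q (fun hq => hp hq.symm)
  | neg φ ih => exact not_congr (ih _ _ hp hs)
  | and φ ψ ihφ ihψ =>
    simp only [FormulaC.atoms, Finset.mem_union, not_or] at hp
    exact and_congr (ihφ _ _ hp.1 hs) (ihψ _ _ hp.2 hs)
  | or φ ψ ihφ ihψ =>
    simp only [FormulaC.atoms, Finset.mem_union, not_or] at hp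
    exact or_congr (ihφ _ _ hp.1 hs) (ihψ _ _ hp.2 hs)
  | D B φ ih =>
    constructor
    · intro hsat t' ht'
      obtain ⟨t, ht, hρ⟩ := (hbis _ _ hs).2.2 B.1 B.2 _ ht'
      exact (ih _ _ hp hρ).mp (hsat t ht)
    · intro hsat t ht
      obtain ⟨t', ht', hρ⟩ := (hbis _ _ hs).2.1 B.1 B.2 _ ht
      exact (ih _ _ hp hρ).mpr (hsat t' ht')
  | C φ ih =>
    constructor
    · intro hsat t' ht'
      obtain ⟨t, ht, hρ⟩ := backTC _ _ hs _ ht'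
      exact (ih _ _ hp hρ).mp (hsat t ht)
    · intro hsat t ht
      obtain ⟨t', ht', hρ⟩ := forthTC _ _ hs _ ht
      exact (ih _ _ hp hρ).mpr (hsat t' ht')

end DKLogic
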